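/- For every real t with |t| < π/2, the series ∑_{n=0}^∞ A(n)·tⁿ/n! converges and its sum equals tan t + sec t (i.e. tan t + 1/cos t); that is, tan + sec is the exponential generating function of the Bernoulli–Euler numbers. -/

import Mathlib

/-- The Bernoulli–Euler (zigzag, up-down) numbers: `A 0 = 1`, `A 1 = 1`, and
`2 * A (n+1) = ∑ k in range (n+1), (n.choose k) * A k * A (n-k)`. -/
def A : ℕ → ℕ
  | 0 => 1
  | 1 => 1
  | n + 2 =>
      (∑ k ∈ (Finset.range (n + 2)).attach,
        Nat.choose (n + 1) k.1 * A k.1 * A (n + 1 - k.1)) / 2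
decreasing_by
  · have := Finset.mem_range.mp k.2; omega
  · have := Finset.mem_range.mp k.2; omega

/-- `K n l` : number of connected components of the space of very nice
M-morsifications of the multiboundary singularity `B_n^l`, extended by the
recurrence `K n (l+1) = K (n+2) l − (n+2)·l·K (n+2) (l−1)` for `l ≥ 1`,
with `K n 0 = A (n-1)` for `n ≥ 1`, `K n 0 = 0` for `n ≤ 0`,
and `K n 1 = K (n+2) 0`. -/
def K : ℤ → ℕ → ℤ
  | n, 0 => if 1 ≤ n then (A (n - 1).toNat : ℤ) else 0
  | n, 1 => K (n + 2) 0
  | n, (l + 2) => K (n + 2) (l + 1) - (n + 2) * (l + 1) * K (n + 2) l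

open Finset Complex Real

namespace EgfAux

lemma A_sum_even (n : ℕ) :
    2 ∣ ∑ k ∈ Finset.range (n + 2), (n+1).choose k * A k * A (n + 1 - k) := by
  rw [← ZMod.natCast_eq_zero_iff, Nat.cast_sum]
  refine Finset.sum_involution (fun k _ => n + 1 - k) ?_ ?_ ?_ ?_
  · intro a ha
    have ha' : a ≤ n + 1 := by have := Finset.mem_range.mp ha; omega
    show ((_ : ℕ) : ZMod 2) + ((_ : ℕ) : ZMod 2) = 0
    rw [← Nat.cast_add, ZMod.natCast_eq_zero_iff,
      Nat.choose_symm ha', Nat.sub_sub_self ha']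
    exact ⟨(n+1).choose a * A a * A (n+1-a), by ring⟩
  · intro a ha h heq
    have h2a : n + 1 - a = a := heq
    have ha' : a < n + 2 := Finset.mem_range.mp ha
    apply h
    rw [ZMod.natCast_eq_zero_iff]
    have hcb : 2 ∣ (n+1).choose a := by
      have : n + 1 = 2 * a := by omega
      rw [this, ← Nat.centralBinom]
      exact Nat.two_dvd_centralBinom_of_one_le (by omega)
    exact (hcb.mul_right _).mul_right _
  · intro a ha
    simp only [Finset.mem_range] at ha ⊢; omega
  · intro a ha
    have := Finset.mem_range.mp ha
    show n + 1 - (n + 1 - a) = a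
    omega

lemma A_rec (n : ℕ) :
    2 * A (n + 2) = ∑ k ∈ Finset.range (n + 2), (n+1).choose k * A k * A (n + 1 - k) := by
  rw [A, Finset.sum_attach (Finset.range (n+2)) (fun k => (n+1).choose k * A k * A (n+1-k))]
  exact Nat.mul_div_cancel' (A_sum_even n)

noncomputable def fc : ℂ → ℂ := fun z => (1 + Complex.sin z) / Complex.cos z

def S : Set ℂ := {z | Complex.cos z ≠ 0}

lemma S_open : IsOpen S :=
  isOpen_compl_iff.mpr (isClosed_singleton.preimage Complex.continuous_cos)

lemma mem_S_of_norm_lt {z : ℂ} (h : ‖z‖ < π / 2) : z ∈ S := by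
  intro h0
  rw [Complex.cos_eq_zero_iff] at h0
  obtain ⟨k, hk⟩ := h0
  have : z = (((2 * k + 1 : ℤ) : ℝ) * π / 2 : ℝ) := by rw [hk]; push_cast; ring
  rw [this, Complex.norm_real, Real.norm_eq_abs, abs_div, abs_mul, abs_of_pos Real.pi_pos,
    show |(2:ℝ)| = 2 from abs_two] at h
  have h1 : (1 : ℝ) ≤ |((2 * k + 1 : ℤ) : ℝ)| := by
    rw [← Int.cast_abs]
    exact_mod_cast Int.one_le_abs (by omega)
  nlinarith [Real.pi_pos]

lemma zero_mem_S : (0 : ℂ) ∈ S := by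
  show Complex.cos 0 ≠ 0
  rw [Complex.cos_zero]; exact one_ne_zero

lemma fc_diffAt {z : ℂ} (hz : Complex.cos z ≠ 0) : DifferentiableAt ℂ fc z :=
  ((differentiableAt_const _).add Complex.differentiable_sin.differentiableAt).div
    Complex.differentiable_cos.differentiableAt hz

lemma fc_analytic : AnalyticOnNhd ℂ fc S :=
  DifferentiableOn.analyticOnNhd (fun z hz => (fc_diffAt hz).differentiableWithinAt) S_open

lemma fc_deriv {z : ℂ} (hz : z ∈ S) : deriv fc z = (1 + fc z ^ 2) / 2 := by
  have hc : Complex.cos z ≠ 0 := hz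
  have h1 : HasDerivAt (fun w => 1 + Complex.sin w) (Complex.cos z) z :=
    (Complex.hasDerivAt_sin z).const_add 1
  have h2 : HasDerivAt Complex.cos (-Complex.sin z) z := Complex.hasDerivAt_cos z
  have h3 : HasDerivAt fc ((Complex.cos z * Complex.cos z -
      (1 + Complex.sin z) * -Complex.sin z) / Complex.cos z ^ 2) z := h1.div h2 hc
  rw [h3.deriv]
  have hs := Complex.sin_sq_add_cos_sq z
  show _ = (1 + ((1 + Complex.sin z) / Complex.cos z) ^ 2) / 2
  field_simp
  linear_combination hs

lemma pascal_sum (n : ℕ) (a : ℕ → ℂ) :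
    ∑ k ∈ range (n + 2), ((n+1).choose k : ℂ) * a k
      = ∑ k ∈ range (n + 1), (n.choose k : ℂ) * a (k + 1)
        + ∑ k ∈ range (n + 1), (n.choose k : ℂ) * a k := by
  rw [Finset.sum_range_succ' (fun k => ((n+1).choose k : ℂ) * a k) (n+1)]
  rw [Finset.sum_congr rfl (fun k (_ : k ∈ range (n+1)) => by
    show ((n+1).choose (k+1) : ℂ) * a (k+1)
      = (n.choose (k+1) : ℂ) * a (k+1) + (n.choose k : ℂ) * a (k+1)
    rw [Nat.choose_succ_succ]; push_cast; ring)]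
  rw [Finset.sum_add_distrib]
  have h3 := (Finset.sum_range_succ' (fun k => (n.choose k : ℂ) * a k) (n+1)).symm
  have h4 : ∑ k ∈ range (n+2), (n.choose k : ℂ) * a k
      = ∑ k ∈ range (n+1), (n.choose k : ℂ) * a k := by
    rw [Finset.sum_range_succ]; simp
  simp only [Nat.choose_zero_right, Nat.cast_one, one_mul] at h3 ⊢
  linear_combination h3 + h4

variable {s : Set ℂ}

lemma itDW_eq (hs : IsOpen s) (f : ℂ → ℂ) (n : ℕ) {x : ℂ} (hx : x ∈ s) :
    iteratedDerivWithin n f s x = iteratedDeriv n f x := by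
  rw [iteratedDerivWithin_eq_iteratedFDerivWithin, iteratedDeriv_eq_iteratedFDeriv,
    iteratedFDerivWithin_of_isOpen n hs hx]

lemma itD_add (hs : IsOpen s) {x : ℂ} (hx : x ∈ s) {n : ℕ} {F G : ℂ → ℂ}
    (hF : ContDiffOn ℂ n F s) (hG : ContDiffOn ℂ n G s) :
    iteratedDeriv n (fun y => F y + G y) x = iteratedDeriv n F x + iteratedDeriv n G x := by
  rw [← itDW_eq hs _ n hx, ← itDW_eq hs F n hx, ← itDW_eq hs G n hx,
    show (fun y => F y + G y) = F + G from rfl,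
    iteratedDerivWithin_add hx hs.uniqueDiffOn (hF x hx) (hG x hx)]

lemma itD_const_mul (hs : IsOpen s) {x : ℂ} (hx : x ∈ s) {n : ℕ} {F : ℂ → ℂ} (c : ℂ)
    (hF : ContDiffOn ℂ n F s) :
    iteratedDeriv n (fun y => c * F y) x = c * iteratedDeriv n F x := by
  rw [← itDW_eq hs _ n hx, ← itDW_eq hs F n hx,
    iteratedDerivWithin_const_mul hx hs.uniqueDiffOn c (hF x hx)]

lemma itD_leibniz (hs : IsOpen s) :
    ∀ (n : ℕ) (f g : ℂ → ℂ), AnalyticOnNhd ℂ f s → AnalyticOnNhd ℂ g s → ∀ x ∈ s,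
    iteratedDeriv n (fun y => f y * g y) x =
      ∑ k ∈ range (n + 1),
        (n.choose k : ℂ) * iteratedDeriv k f x * iteratedDeriv (n - k) g x := by
  intro n
  induction n with
  | zero => intro f g _ _ x _; simp
  | succ n ih =>
    intro f g hf hg x hx
    rw [iteratedDeriv_succ']
    have hEq : Set.EqOn (deriv fun y => f y * g y)
        (fun y => (deriv f y * g y) + (f y * deriv g y)) s := fun y hy =>
      deriv_mul ((hf y hy).differentiableAt) ((hg y hy).differentiableAt)
    rw [hEq.iteratedDeriv_of_isOpen hs n hx]
    have hf' : AnalyticOnNhd ℂ (deriv f) s := hf.deriv_of_isOpen hs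
    have hg' : AnalyticOnNhd ℂ (deriv g) s := hg.deriv_of_isOpen hs
    rw [itD_add hs hx ((hf'.mul hg).contDiffOn hs.uniqueDiffOn)
      ((hf.mul hg').contDiffOn hs.uniqueDiffOn)]
    rw [ih (deriv f) g hf' hg x hx, ih f (deriv g) hf hg' x hx]
    have e1 : ∀ k, iteratedDeriv k (deriv f) x = iteratedDeriv (k+1) f x := fun k => by
      rw [← iteratedDeriv_succ']
    have e2 : ∀ k, iteratedDeriv k (deriv g) x = iteratedDeriv (k+1) g x := fun k => by
      rw [← iteratedDeriv_succ']
    set a : ℕ → ℂ := fun k => iteratedDeriv k f x * iteratedDeriv (n + 1 - k) g x with ha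
    have lhs1 : ∑ k ∈ range (n + 1), (n.choose k : ℂ) * iteratedDeriv k (deriv f) x *
        iteratedDeriv (n - k) g x = ∑ k ∈ range (n + 1), (n.choose k : ℂ) * a (k + 1) := by
      refine Finset.sum_congr rfl fun k hk => ?_
      have hk' : k ≤ n := Nat.lt_succ_iff.mp (mem_range.mp hk)
      have hb : a (k+1) = iteratedDeriv (k+1) f x * iteratedDeriv (n + 1 - (k+1)) g x := rfl
      have hnk : n - k = n + 1 - (k + 1) := by omega
      rw [hb, e1 k, hnk]; ring
    have lhs2 : ∑ k ∈ range (n + 1), (n.choose k : ℂ) * iteratedDeriv k f x *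
        iteratedDeriv (n - k) (deriv g) x = ∑ k ∈ range (n + 1), (n.choose k : ℂ) * a k := by
      refine Finset.sum_congr rfl fun k hk => ?_
      have hk' : k ≤ n := Nat.lt_succ_iff.mp (mem_range.mp hk)
      have hb : a k = iteratedDeriv k f x * iteratedDeriv (n + 1 - k) g x := rfl
      have hnk : n - k + 1 = n + 1 - k := by omega
      rw [hb, e2 (n - k), hnk]; ring
    have goal2 : ∑ k ∈ range (n + 2), ((n+1).choose k : ℂ) * iteratedDeriv k f x *
        iteratedDeriv (n + 1 - k) g x = ∑ k ∈ range (n + 2), ((n+1).choose k : ℂ) * a k := by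
      refine Finset.sum_congr rfl fun k _ => ?_
      have hb : a k = iteratedDeriv k f x * iteratedDeriv (n + 1 - k) g x := rfl
      rw [hb]; ring
    rw [lhs1, lhs2, goal2]
    exact (pascal_sum n a).symm

lemma itD_const (c : ℂ) : ∀ n : ℕ, iteratedDeriv (n+1) (fun _ : ℂ => c) = fun _ => 0 := by
  intro n
  induction n generalizing c with
  | zero =>
    rw [iteratedDeriv_succ', iteratedDeriv_zero]
    funext x
    exact deriv_const x c
  | succ n ih =>
    rw [iteratedDeriv_succ', show deriv (fun _ : ℂ => c) = fun _ : ℂ => (0:ℂ) from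
      funext fun x => deriv_const x c, ih 0]

noncomputable def d (n : ℕ) : ℂ := iteratedDeriv n fc 0

lemma d_zero : d 0 = 1 := by
  rw [d, iteratedDeriv_zero]
  show (1 + Complex.sin 0) / Complex.cos 0 = 1
  rw [Complex.sin_zero, Complex.cos_zero]
  norm_num

lemma d_rec (n : ℕ) : d (n+1) = (if n = 0 then (1/2 : ℂ) else 0)
    + (1/2) * ∑ k ∈ range (n+1), (n.choose k : ℂ) * d k * d (n-k) := by
  have h1 : d (n+1) = iteratedDeriv n (deriv fc) 0 := by rw [d, iteratedDeriv_succ']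
  have hEq : Set.EqOn (deriv fc) (fun z => (1/2 : ℂ) + (1/2) * (fc z * fc z)) S :=
    fun z hz => by rw [fc_deriv hz]; ring
  rw [h1, hEq.iteratedDeriv_of_isOpen S_open n zero_mem_S]
  have hff : AnalyticOnNhd ℂ (fun z => fc z * fc z) S := fc_analytic.mul fc_analytic
  rw [itD_add S_open zero_mem_S contDiffOn_const
    ((analyticOnNhd_const.mul hff).contDiffOn S_open.uniqueDiffOn)]
  rw [itD_const_mul S_open zero_mem_S ((1:ℂ)/2) (hff.contDiffOn S_open.uniqueDiffOn)]
  rw [itD_leibniz S_open n fc fc fc_analytic fc_analytic 0 zero_mem_S]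
  congr 1
  cases n with
  | zero => simp
  | succ m => rw [itD_const ((1:ℂ)/2) m]; simp

lemma d_one : d 1 = 1 := by
  rw [d_rec 0]
  simp [d_zero]
  norm_num

lemma d_eq_A : ∀ n, d n = (A n : ℂ) := by
  intro n
  induction n using Nat.strong_induction_on with
  | _ n ih =>
    match n with
    | 0 => rw [d_zero, show A 0 = 1 from by rw [A]]; norm_num
    | 1 => rw [d_one, show A 1 = 1 from by rw [A]]; norm_num
    | (n+2) =>
      rw [show n + 2 = (n+1)+1 from rfl, d_rec (n+1), if_neg (Nat.succ_ne_zero n)]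
      have hsum : ∑ k ∈ range (n+2), ((n+1).choose k : ℂ) * d k * d (n+1-k)
          = ((∑ k ∈ range (n+2), (n+1).choose k * A k * A (n+1-k) : ℕ) : ℂ) := by
        push_cast
        refine Finset.sum_congr rfl fun k hk => ?_
        have hk' : k < n + 2 := mem_range.mp hk
        rw [ih k (by omega), ih (n+1-k) (by omega)]
      rw [hsum, ← A_rec n]
      push_cast
      ring

end EgfAux

open EgfAux in
open Real in
/-- `tan t + sec t` is the exponential generating function of the
Bernoulli–Euler numbers: for `|t| < π/2`,
`∑ A n · tⁿ/n! = tan t + sec t`. -/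
theorem egf_bernoulliEuler_eq_tan_add_sec (t : ℝ) (ht : |t| < π / 2) :
    HasSum (fun n : ℕ => (A n : ℝ) * t ^ n / n.factorial)
      (Real.tan t + 1 / Real.cos t) := by
  -- choose a radius
  set r : ℝ := (|t| + π / 2) / 2 with hr
  have hr0 : 0 < r := by positivity
  have hrlt : r < π / 2 := by rw [hr]; linarith
  have htr : |t| < r := by rw [hr]; linarith
  set R : NNReal := ⟨r, hr0.le⟩ with hR
  have hdiff : DifferentiableOn ℂ fc (Metric.closedBall (0:ℂ) R) := by
    intro z hz
    have hz' : ‖z‖ ≤ r := by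
      exact (by simpa [Complex.dist_eq] using Metric.mem_closedBall.mp hz : ‖z‖ ≤ (R : ℝ))
    exact (fc_diffAt (mem_S_of_norm_lt (lt_of_le_of_lt hz' hrlt))).differentiableWithinAt
  have hps := hdiff.hasFPowerSeriesOnBall (by exact_mod_cast hr0)
  have hmem : (t : ℂ) ∈ Metric.eball (0 : ℂ) R := by
    rw [Metric.mem_eball, edist_zero_right, enorm_eq_nnnorm]
    have : ‖(t : ℂ)‖₊ = ‖t‖₊ := by
      ext; simp [Complex.norm_real]
    rw [this]
    exact_mod_cast htr
  have hsum := hps.hasSum_iteratedFDeriv hmem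
  rw [zero_add] at hsum
  have hterm : ∀ n : ℕ, ((n.factorial : ℂ))⁻¹ • iteratedFDeriv ℂ n fc 0 (fun _ => (t:ℂ))
      = (((A n : ℝ) * t ^ n / n.factorial : ℝ) : ℂ) := by
    intro n
    rw [iteratedFDeriv_apply_eq_iteratedDeriv_mul_prod]
    have : (iteratedDeriv n fc 0) = (A n : ℂ) := d_eq_A n
    rw [this, Finset.prod_const, Finset.card_univ, Fintype.card_fin]
    push_cast
    simp only [smul_eq_mul]
    ring
  rw [funext hterm] at hsum
  have hcos : Real.cos t ≠ 0 := by
    have h' := abs_lt.mp ht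
    exact (Real.cos_pos_of_mem_Ioo ⟨by linarith [h'.1], h'.2⟩).ne'
  have hfc : fc (t : ℂ) = ((Real.tan t + 1 / Real.cos t : ℝ) : ℂ) := by
    show (1 + Complex.sin t) / Complex.cos t = _
    have hc : (Real.cos t : ℂ) ≠ 0 := by exact_mod_cast hcos
    rw [← Complex.ofReal_sin, ← Complex.ofReal_cos, Real.tan_eq_sin_div_cos]
    push_cast
    field_simp
    ring
  rw [hfc] at hsum
  exact (Complex.hasSum_ofReal).mp hsum
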